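/- Let m ≥ 1, let Σ be an m×m real symmetric positive definite matrix with symmetric positive definite square root Σ^{1/2}, let t_1,…,t_m be real numbers, set t_{m+1} := 0 and c_i := t_i − t_{i+1}, and define φ : M_m(ℝ) → ℂ by φ(T) := ∏_{i=1}^m det(E_iᵀ(I_m − i·Σ^{1/2} T Σ^{1/2})E_i)^{−c_i}, using principal-branch complex powers. Let T be an m×m real matrix such that det(E_iᵀ(I_m − i·Σ^{1/2} T Σ^{1/2})E_i) does not lie in the closed negative real axis (−∞,0] for each i = 1,…,m. Then φ is Fréchet differentiable (over ℝ) at T, and its derivative satisfies Dφ(T)(H) = i·(∑_{i=1}^m c_i · tr(A_i H))·φ(T) for every H ∈ M_m(ℝ), where A_i := Σ^{1/2} E_i (E_iᵀ(I_m − i·Σ^{1/2} T Σ^{1/2})E_i)^{−1} E_iᵀ Σ^{1/2}. -/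

import Mathlib

open MeasureTheory Matrix Finset

noncomputable section

/-- Measurable space structure on real matrices (the product σ-algebra). -/
instance matrixMeasurableSpace (m n : ℕ) : MeasurableSpace (Matrix (Fin m) (Fin n) ℝ) :=
  MeasurableSpace.pi

attribute [local instance] Matrix.normedAddCommGroup Matrix.normedSpace

/-- `nth κ j` is `κ j` when `j < m` and `0` otherwise. -/
def nth {m : ℕ} (κ : Fin m → ℕ) (j : ℕ) : ℕ := if h : j < m then κ ⟨j, h⟩ else 0

/-- Determinant of the `k × k` leading principal submatrix (for `k ≤ m`). -/
def lpm {R : Type*} [CommRing R] {m : ℕ} (A : Matrix (Fin m) (Fin m) R) (k : ℕ) : R :=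
  (Matrix.of fun r s : Fin (min k m) =>
    A (Fin.castLE (min_le_right k m) r) (Fin.castLE (min_le_right k m) s)).det

/-- The generalized power (highest weight vector)
`q_κ(A) = det(A)^{k_m} ∏_{i=1}^{m-1} det(A_i)^{k_i - k_{i+1}}`. -/
def gpow {R : Type*} [CommRing R] {m : ℕ} (κ : Fin m → ℕ) (A : Matrix (Fin m) (Fin m) R) : R :=
  ∏ i : Fin m, lpm A ((i : ℕ) + 1) ^ (nth κ (i : ℕ) - nth κ ((i : ℕ) + 1))

/-- Lebesgue measure on symmetric matrices: the pushforward of Lebesgue measure on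
`ℝ^{m(m+1)/2}` under the coordinates `(x_{ij})_{i ≤ j}`. -/
def symVolume (m : ℕ) : Measure (Matrix (Fin m) (Fin m) ℝ) :=
  Measure.map (fun x : ({p : Fin m × Fin m // p.1 ≤ p.2} → ℝ) =>
    Matrix.of fun i j => if h : i ≤ j then x ⟨(i, j), h⟩ else x ⟨(j, i), le_of_not_ge h⟩)
    volume

/-- The open cone of symmetric positive definite real matrices. -/
def PDcone (m : ℕ) : Set (Matrix (Fin m) (Fin m) ℝ) := {X | X.PosDef}

/-- The `m × k` matrix formed by the first `k` columns of the identity matrix. -/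
def Emat (R : Type*) [Zero R] [One R] (m k : ℕ) : Matrix (Fin m) (Fin k) R :=
  Matrix.of fun r c => if (r : ℕ) = (c : ℕ) then 1 else 0

/-- The generalized gamma function of weight `κ`:
`Γ_m[a, κ] = π^{m(m-1)/4} ∏_{i=1}^m Γ(a + k_i - (i-1)/2)`. -/
def GammaI (m : ℕ) (κ : Fin m → ℕ) (a : ℝ) : ℝ :=
  Real.pi ^ (((m * (m - 1) : ℕ) : ℝ) / 4) *
    ∏ i : Fin m, Real.Gamma (a + κ i - (i : ℝ) / 2)

/-- Kotz's generalized gamma function of weight `-κ`: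
`Γ_m[a, -κ] = π^{m(m-1)/4} ∏_{i=1}^m Γ(a - k_i - (m-i)/2)`. -/
def GammaII (m : ℕ) (κ : Fin m → ℕ) (a : ℝ) : ℝ :=
  Real.pi ^ (((m * (m - 1) : ℕ) : ℝ) / 4) *
    ∏ i : Fin m, Real.Gamma (a - κ i - ((m : ℝ) - 1 - (i : ℝ)) / 2)

/-- The Riesz type I density with parameters `(a, κ, Σ)`. -/
def densityI {m : ℕ} (κ : Fin m → ℕ) (Sig : Matrix (Fin m) (Fin m) ℝ) (a : ℝ)
    (X : Matrix (Fin m) (Fin m) ℝ) : ℝ :=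
  Real.exp (-((Sig⁻¹ * X).trace)) * X.det ^ (a - ((m : ℝ) + 1) / 2) * gpow κ X /
    (GammaI m κ a * Sig.det ^ a * gpow κ Sig)

/-- The Riesz type II density with parameters `(a, κ, Σ)`. -/
def densityII {m : ℕ} (κ : Fin m → ℕ) (Sig : Matrix (Fin m) (Fin m) ℝ) (a : ℝ)
    (X : Matrix (Fin m) (Fin m) ℝ) : ℝ :=
  Real.exp (-((Sig⁻¹ * X).trace)) * X.det ^ (a - ((m : ℝ) + 1) / 2) * gpow κ X⁻¹ /
    (GammaII m κ a * Sig.det ^ a * gpow κ Sig⁻¹)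

/-- Entrywise coercion of a real matrix to a complex matrix. -/
def cmat {m : ℕ} (A : Matrix (Fin m) (Fin m) ℝ) : Matrix (Fin m) (Fin m) ℂ :=
  A.map Complex.ofReal

/-- `nthR t j` is `t j` when `j < m` and `0` otherwise. -/
def nthR {m : ℕ} (t : Fin m → ℝ) (j : ℕ) : ℝ := if h : j < m then t ⟨j, h⟩ else 0

/-- The `k × k` leading principal submatrix `E_kᵀ M E_k` of a complex matrix. -/
def lpsub {m : ℕ} (M : Matrix (Fin m) (Fin m) ℂ) (k : ℕ) : Matrix (Fin k) (Fin k) ℂ :=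
  (Emat ℂ m k)ᵀ * M * Emat ℂ m k

/-- The complex matrix `I_m - i · Σ^{1/2} T Σ^{1/2}`. -/
def Rmat {m : ℕ} (Shalf T : Matrix (Fin m) (Fin m) ℝ) : Matrix (Fin m) (Fin m) ℂ :=
  1 - Complex.I • (cmat Shalf * cmat T * cmat Shalf)

/-- `A_i = Σ^{1/2} E_i (E_iᵀ (I_m - i Σ^{1/2} T Σ^{1/2}) E_i)⁻¹ E_iᵀ Σ^{1/2}`. -/
def Amat {m : ℕ} (Shalf T : Matrix (Fin m) (Fin m) ℝ) (i : Fin m) :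
    Matrix (Fin m) (Fin m) ℂ :=
  cmat Shalf * Emat ℂ m ((i : ℕ) + 1) * (lpsub (Rmat Shalf T) ((i : ℕ) + 1))⁻¹ *
    (Emat ℂ m ((i : ℕ) + 1))ᵀ * cmat Shalf

/-- The characteristic function of the Riesz type I distribution,
`φ(T) = ∏_i det(E_iᵀ (I - i Σ^{1/2} T Σ^{1/2}) E_i)^{-(t_i - t_{i+1})}`. -/
def phiI {m : ℕ} (Shalf : Matrix (Fin m) (Fin m) ℝ) (t : Fin m → ℝ)
    (T : Matrix (Fin m) (Fin m) ℝ) : ℂ :=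
  ∏ i : Fin m,
    (lpsub (Rmat Shalf T) ((i : ℕ) + 1)).det ^ ((-(t i - nthR t ((i : ℕ) + 1)) : ℝ) : ℂ)

/-- The characteristic function of the Riesz type II distribution,
`ψ(T) = ∏_i det(E_iᵀ (I - i Σ^{1/2} T Σ^{1/2}) E_i)^{(t_i - t_{i+1})}`. -/
def psiII {m : ℕ} (Shalf : Matrix (Fin m) (Fin m) ℝ) (t : Fin m → ℝ)
    (T : Matrix (Fin m) (Fin m) ℝ) : ℂ :=
  ∏ i : Fin m,
    (lpsub (Rmat Shalf T) ((i : ℕ) + 1)).det ^ (((t i - nthR t ((i : ℕ) + 1)) : ℝ) : ℂ)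

namespace RieszAux
open Matrix

variable {k : ℕ}

lemma det_norm_le (M : Fin k → Fin k → ℂ) :
    ‖(Matrix.detRowAlternating :
        AlternatingMap ℂ (Fin k → ℂ) ℂ (Fin k)).toMultilinearMap M‖
      ≤ (Nat.factorial k : ℝ) * ∏ i, ‖M i‖ := by
  have h0 : (Matrix.detRowAlternating :
      AlternatingMap ℂ (Fin k → ℂ) ℂ (Fin k)).toMultilinearMap M
      = (Matrix.of M).det := rfl
  rw [h0, Matrix.det_apply]
  refine (norm_sum_le _ _).trans ?_
  have hbound : ∀ σ : Equiv.Perm (Fin k),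
      ‖Equiv.Perm.sign σ • ∏ i, (Matrix.of M) (σ i) i‖ ≤ ∏ i, ‖M i‖ := by
    intro σ
    have h1 : ‖Equiv.Perm.sign σ • ∏ i, (Matrix.of M) (σ i) i‖
        = ‖∏ i, M (σ i) i‖ := by
      rcases Int.units_eq_one_or σ.sign with h | h <;> simp [h]
    rw [h1, norm_prod]
    have h2 : ∏ i, ‖M (σ i) i‖ = ∏ j, ‖M j (σ.symm j)‖ := by
      rw [← Equiv.prod_comp σ fun j => ‖M j (σ.symm j)‖]
      simp
    rw [h2]
    exact Finset.prod_le_prod (fun _ _ => norm_nonneg _)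
      (fun j _ => norm_le_pi_norm (M j) (σ.symm j))
  refine (Finset.sum_le_sum fun σ _ => hbound σ).trans ?_
  rw [Finset.sum_const, nsmul_eq_mul]
  apply mul_le_mul_of_nonneg_right
  · simp [Fintype.card_perm]
  · exact Finset.prod_nonneg fun _ _ => norm_nonneg _

def detCM (k : ℕ) : ContinuousMultilinearMap ℂ (fun _ : Fin k => (Fin k → ℂ)) ℂ :=
  MultilinearMap.mkContinuous
    ((Matrix.detRowAlternating :
        AlternatingMap ℂ (Fin k → ℂ) ℂ (Fin k)).toMultilinearMap)
    (Nat.factorial k) det_norm_le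

lemma sum_det_updateRow (M D : Matrix (Fin k) (Fin k) ℂ) :
    ∑ i, (M.updateRow i (D i)).det = (M.adjugate * D).trace := by
  have h1 : ∀ i, (M.updateRow i (D i)).det
      = ∑ j, D i j * (M.updateRow i (Pi.single j 1)).det := by
    intro i
    have hD : D i = ∑ j, (D i j) • (Pi.single j 1 : Fin k → ℂ) := by
      funext x
      simp [Pi.single_apply, Finset.sum_ite_eq']
    calc (M.updateRow i (D i)).det
        = (Matrix.detRowAlternating :
            AlternatingMap ℂ (Fin k → ℂ) ℂ (Fin k)).toMultilinearMap
            (Function.update (fun r => M r) i (∑ j, (D i j) • (Pi.single j 1 : Fin k → ℂ))) := by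
          rw [← hD]; rfl
      _ = ∑ j, (Matrix.detRowAlternating :
            AlternatingMap ℂ (Fin k → ℂ) ℂ (Fin k)).toMultilinearMap
            (Function.update (fun r => M r) i ((D i j) • (Pi.single j 1 : Fin k → ℂ))) := by
          rw [MultilinearMap.map_update_sum]
      _ = ∑ j, D i j * (M.updateRow i (Pi.single j 1)).det := by
          refine Finset.sum_congr rfl fun j _ => ?_
          have : (Matrix.detRowAlternating :
              AlternatingMap ℂ (Fin k → ℂ) ℂ (Fin k)).toMultilinearMap
              (Function.update (fun r => M r) i ((D i j) • (Pi.single j 1 : Fin k → ℂ)))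
              = (M.updateRow i ((D i j) • (Pi.single j 1 : Fin k → ℂ))).det := rfl
          rw [this, Matrix.det_updateRow_smul]
  rw [Matrix.trace]
  simp only [Matrix.diag_apply, Matrix.mul_apply, Matrix.adjugate_apply]
  rw [Finset.sum_comm]
  refine Finset.sum_congr rfl fun i _ => ?_
  rw [h1 i]
  exact Finset.sum_congr rfl fun j _ => mul_comm _ _

def detDerivL (M : Matrix (Fin k) (Fin k) ℂ) : Matrix (Fin k) (Fin k) ℂ →ₗ[ℝ] ℂ where
  toFun D := (M.adjugate * D).trace
  map_add' D E := by simp [Matrix.mul_add]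
  map_smul' r D := by simp [Matrix.mul_smul]

def detDerivCLM (M : Matrix (Fin k) (Fin k) ℂ) : Matrix (Fin k) (Fin k) ℂ →L[ℝ] ℂ :=
  LinearMap.toContinuousLinearMap (detDerivL M)

lemma hasFDerivAt_det (M : Matrix (Fin k) (Fin k) ℂ) :
    HasFDerivAt (fun A : Matrix (Fin k) (Fin k) ℂ => A.det) (detDerivCLM M) M := by
  have h := ((detCM k).hasFDerivAt (x := fun i => M i)).restrictScalars ℝ
  have heq : (((detCM k).linearDeriv (fun i => M i)).restrictScalars ℝ)
      = detDerivCLM M := by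
    apply ContinuousLinearMap.ext
    intro D
    have : (((detCM k).linearDeriv (fun i => M i)).restrictScalars ℝ) D
        = ∑ i, detCM k (Function.update (fun i => M i) i (D i)) := by
      simp
    rw [this]
    have h2 : ∀ i, detCM k (Function.update (fun i => M i) i (D i))
        = (M.updateRow i (D i)).det := fun i => rfl
    simp only [h2]
    exact sum_det_updateRow M D
  rw [← heq]
  exact h


variable {m : ℕ}

lemma cmat_add (A B : Matrix (Fin m) (Fin m) ℝ) : cmat (A + B) = cmat A + cmat B := by
  ext i j; simp [cmat]

lemma cmat_smul (r : ℝ) (A : Matrix (Fin m) (Fin m) ℝ) :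
    cmat (r • A) = (r : ℂ) • cmat A := by
  ext i j; simp [cmat]

def lpsubL (Shalf : Matrix (Fin m) (Fin m) ℝ) (k : ℕ) :
    Matrix (Fin m) (Fin m) ℝ →ₗ[ℝ] Matrix (Fin k) (Fin k) ℂ where
  toFun H := lpsub (cmat Shalf * cmat H * cmat Shalf) k
  map_add' A B := by
    simp [cmat_add, lpsub, Matrix.mul_add, Matrix.add_mul]
  map_smul' r A := by
    simp only [cmat_smul, lpsub, Matrix.mul_smul, Matrix.smul_mul, RingHom.id_apply]
    ext i j
    simp [Complex.real_smul]

def lpsubCLM (Shalf : Matrix (Fin m) (Fin m) ℝ) (k : ℕ) :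
    Matrix (Fin m) (Fin m) ℝ →L[ℝ] Matrix (Fin k) (Fin k) ℂ :=
  LinearMap.toContinuousLinearMap (lpsubL Shalf k)

lemma hasFDerivAt_lpsub (Shalf : Matrix (Fin m) (Fin m) ℝ) (k : ℕ)
    (T : Matrix (Fin m) (Fin m) ℝ) :
    HasFDerivAt (fun S => lpsub (Rmat Shalf S) k)
      ((-Complex.I) • lpsubCLM Shalf k) T := by
  have h0 : (fun S : Matrix (Fin m) (Fin m) ℝ => lpsub (Rmat Shalf S) k)
      = fun S => lpsub (1 : Matrix (Fin m) (Fin m) ℂ) k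
          + ((-Complex.I) • lpsubCLM Shalf k) S := by
    funext S
    have h1 : ((-Complex.I) • lpsubCLM Shalf k) S
        = (-Complex.I) • lpsub (cmat Shalf * cmat S * cmat Shalf) k := by
      simp [lpsubCLM, lpsubL]
      rfl
    rw [h1]
    simp [Rmat, lpsub, sub_eq_add_neg, Matrix.mul_add, Matrix.add_mul, Matrix.mul_neg,
      Matrix.neg_mul, Matrix.mul_smul, Matrix.smul_mul, Matrix.mul_assoc]
  rw [h0]
  exact (((-Complex.I) • lpsubCLM Shalf k).hasFDerivAt).const_add _

lemma factor_hasFDerivAt (Shalf T : Matrix (Fin m) (Fin m) ℝ) (k : ℕ) (c : ℂ)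
    (h : (lpsub (Rmat Shalf T) k).det ∈ Complex.slitPlane) :
    HasFDerivAt (fun S => (lpsub (Rmat Shalf S) k).det ^ c)
      ((c * (lpsub (Rmat Shalf T) k).det ^ (c - 1)) •
        ((detDerivCLM (lpsub (Rmat Shalf T) k)).comp
          ((-Complex.I) • lpsubCLM Shalf k))) T := by
  have h1 : HasFDerivAt (fun S => (lpsub (Rmat Shalf S) k).det)
      ((detDerivCLM (lpsub (Rmat Shalf T) k)).comp ((-Complex.I) • lpsubCLM Shalf k)) T :=
    (hasFDerivAt_det _).comp T (hasFDerivAt_lpsub Shalf k T)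
  exact (Complex.hasStrictDerivAt_cpow_const h).hasDerivAt.comp_hasFDerivAt T h1

lemma term_eq (Shalf T H : Matrix (Fin m) (Fin m) ℝ) (i : Fin m) (cR : ℝ)
    (h : (lpsub (Rmat Shalf T) ((i : ℕ) + 1)).det ∈ Complex.slitPlane) :
    (((((-cR : ℝ)) : ℂ) *
        (lpsub (Rmat Shalf T) ((i : ℕ) + 1)).det ^ (((((-cR : ℝ)) : ℂ)) - 1)) •
      ((detDerivCLM (lpsub (Rmat Shalf T) ((i : ℕ) + 1))).comp
        ((-Complex.I) • lpsubCLM Shalf ((i : ℕ) + 1)))) H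
    = Complex.I * (cR : ℂ) * (Amat Shalf T i * cmat H).trace *
        (lpsub (Rmat Shalf T) ((i : ℕ) + 1)).det ^ ((((-cR : ℝ)) : ℂ)) := by
  have hne : (lpsub (Rmat Shalf T) ((i : ℕ) + 1)).det ≠ 0 :=
    Complex.slitPlane_ne_zero h
  set Mi := lpsub (Rmat Shalf T) ((i : ℕ) + 1) with hMi
  have hL : (((((-cR : ℝ)) : ℂ) * Mi.det ^ (((((-cR : ℝ)) : ℂ)) - 1)) •
      ((detDerivCLM Mi).comp ((-Complex.I) • lpsubCLM Shalf ((i : ℕ) + 1)))) H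
      = ((((-cR : ℝ)) : ℂ) * Mi.det ^ (((((-cR : ℝ)) : ℂ)) - 1)) *
        ((Mi.adjugate *
          ((-Complex.I) • lpsub (cmat Shalf * cmat H * cmat Shalf) ((i : ℕ) + 1))).trace) := by
    simp [detDerivCLM, detDerivL, lpsubCLM, lpsubL]
    exact Or.inl rfl
  rw [hL]
  have hadj : ∀ X : Matrix (Fin ((i : ℕ) + 1)) (Fin ((i : ℕ) + 1)) ℂ,
      (Mi.adjugate * X).trace = Mi.det * (Mi⁻¹ * X).trace := by
    intro X
    have h2 : Mi.det • Mi⁻¹ = Mi.adjugate := by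
      rw [Matrix.inv_def, Ring.inverse_eq_inv', smul_smul,
        mul_inv_cancel₀ hne, one_smul]
    rw [← h2, Matrix.smul_mul, Matrix.trace_smul, smul_eq_mul]
  rw [Matrix.mul_smul, Matrix.trace_smul, smul_eq_mul, hadj]
  have hpow : Mi.det ^ (((((-cR : ℝ)) : ℂ)) - 1) * Mi.det
      = Mi.det ^ ((((-cR : ℝ)) : ℂ)) := by
    conv_rhs => rw [show ((((-cR : ℝ)) : ℂ)) = (((((-cR : ℝ)) : ℂ)) - 1) + 1 by ring]
    rw [Complex.cpow_add _ _ hne, Complex.cpow_one]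
  have htr : (Mi⁻¹ * lpsub (cmat Shalf * cmat H * cmat Shalf) ((i : ℕ) + 1)).trace
      = (Amat Shalf T i * cmat H).trace := by
    have h1 : Amat Shalf T i * cmat H
        = (cmat Shalf * Emat ℂ m ((i : ℕ) + 1)) *
          (Mi⁻¹ * ((Emat ℂ m ((i : ℕ) + 1))ᵀ * (cmat Shalf * cmat H))) := by
      simp [Amat, hMi, Matrix.mul_assoc]
    rw [h1, Matrix.trace_mul_comm (cmat Shalf * Emat ℂ m ((i : ℕ) + 1))]
    simp [lpsub, Matrix.mul_assoc]
  rw [htr]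
  push_cast
  rw [show (-(cR : ℂ)) * Mi.det ^ ((-(cR : ℂ)) - 1) *
      (-Complex.I * (Mi.det * (Amat Shalf T i * cmat H).trace))
      = Complex.I * (cR : ℂ) * (Amat Shalf T i * cmat H).trace *
        (Mi.det ^ ((-(cR : ℂ)) - 1) * Mi.det) by ring]
  rw [show ((-cR : ℝ) : ℂ) = -(cR : ℂ) by push_cast; ring] at hpow
  rw [hpow]

end RieszAux

open RieszAux in

/-- First Fréchet derivative of the characteristic function of the Riesz type I
distribution: `Dφ(T)(H) = i (∑_i (t_i - t_{i+1}) tr(A_i H)) φ(T)`. -/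
theorem riesz_typeI_charfun_deriv {m : ℕ} (hm : 1 ≤ m)
    (Sig Shalf : Matrix (Fin m) (Fin m) ℝ)
    (hSig : Sig.PosDef) (hShalf : Shalf.PosDef) (hShalf_symm : Shalf.IsSymm)
    (hsq : Shalf * Shalf = Sig)
    (t : Fin m → ℝ)
    (T : Matrix (Fin m) (Fin m) ℝ)
    (hT : ∀ i : Fin m, (lpsub (Rmat Shalf T) ((i : ℕ) + 1)).det ∈ Complex.slitPlane) :
    ∃ L : Matrix (Fin m) (Fin m) ℝ →L[ℝ] ℂ,
      HasFDerivAt (phiI Shalf t) L T ∧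
        ∀ H : Matrix (Fin m) (Fin m) ℝ,
          L H = Complex.I
              * (∑ i : Fin m, ((t i - nthR t ((i : ℕ) + 1) : ℝ) : ℂ)
                  * (Amat Shalf T i * cmat H).trace)
              * phiI Shalf t T := by
  classical
  have hg : ∀ i ∈ (Finset.univ : Finset (Fin m)), HasFDerivAt
      (fun S => (lpsub (Rmat Shalf S) ((i : ℕ) + 1)).det ^
        ((-(t i - nthR t ((i : ℕ) + 1)) : ℝ) : ℂ))
      ((((-(t i - nthR t ((i : ℕ) + 1)) : ℝ) : ℂ) *
          (lpsub (Rmat Shalf T) ((i : ℕ) + 1)).det ^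
            ((((-(t i - nthR t ((i : ℕ) + 1)) : ℝ) : ℂ)) - 1)) •
        ((detDerivCLM (lpsub (Rmat Shalf T) ((i : ℕ) + 1))).comp
          ((-Complex.I) • lpsubCLM Shalf ((i : ℕ) + 1)))) T :=
    fun i _ => factor_hasFDerivAt Shalf T _ _ (hT i)
  have hprod := HasFDerivAt.finset_prod hg
  refine ⟨_, hprod, fun H => ?_⟩
  have hsa : ∀ (s : Finset (Fin m)) (f : Fin m → (Matrix (Fin m) (Fin m) ℝ →L[ℝ] ℂ)),
      (∑ i ∈ s, f i) H = ∑ i ∈ s, f i H := by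
    intro s f
    induction s using Finset.induction_on with
    | empty => simp
    | insert a s ha ih =>
      rw [Finset.sum_insert ha, Finset.sum_insert ha, ContinuousLinearMap.add_apply, ih]
  refine (hsa _ _).trans ?_
  have hterm : ∀ i ∈ (Finset.univ : Finset (Fin m)),
      (((∏ j ∈ Finset.univ.erase i,
          (lpsub (Rmat Shalf T) ((j : ℕ) + 1)).det ^
            ((-(t j - nthR t ((j : ℕ) + 1)) : ℝ) : ℂ)) •
        ((((-(t i - nthR t ((i : ℕ) + 1)) : ℝ) : ℂ) *
          (lpsub (Rmat Shalf T) ((i : ℕ) + 1)).det ^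
            ((((-(t i - nthR t ((i : ℕ) + 1)) : ℝ) : ℂ)) - 1)) •
        ((detDerivCLM (lpsub (Rmat Shalf T) ((i : ℕ) + 1))).comp
          ((-Complex.I) • lpsubCLM Shalf ((i : ℕ) + 1))))) H)
      = Complex.I * (((t i - nthR t ((i : ℕ) + 1) : ℝ) : ℂ)
          * (Amat Shalf T i * cmat H).trace) * phiI Shalf t T := by
    intro i _
    rw [ContinuousLinearMap.smul_apply, smul_eq_mul,
      term_eq Shalf T H i (t i - nthR t ((i : ℕ) + 1)) (hT i)]
    have hpe : (∏ j ∈ Finset.univ.erase i,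
        (lpsub (Rmat Shalf T) ((j : ℕ) + 1)).det ^
          ((-(t j - nthR t ((j : ℕ) + 1)) : ℝ) : ℂ)) *
        (lpsub (Rmat Shalf T) ((i : ℕ) + 1)).det ^
          ((-(t i - nthR t ((i : ℕ) + 1)) : ℝ) : ℂ) = phiI Shalf t T :=
      Finset.prod_erase_mul _ _ (Finset.mem_univ i)
    calc _ = ((∏ j ∈ Finset.univ.erase i,
          (lpsub (Rmat Shalf T) ((j : ℕ) + 1)).det ^
            ((-(t j - nthR t ((j : ℕ) + 1)) : ℝ) : ℂ)) *
          (lpsub (Rmat Shalf T) ((i : ℕ) + 1)).det ^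
            ((-(t i - nthR t ((i : ℕ) + 1)) : ℝ) : ℂ)) *
          (Complex.I * (((t i - nthR t ((i : ℕ) + 1) : ℝ) : ℂ)
            * (Amat Shalf T i * cmat H).trace)) := by ring
      _ = _ := by rw [hpe]; ring
  refine (Finset.sum_congr rfl hterm).trans ?_
  rw [← Finset.sum_mul, ← Finset.mul_sum]
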